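/- Let w ≥ 1 and let {a_s}_{s=0}^w be strictly decreasing positive reals with a_w = 0, and {b_s}_{s=0}^w strictly increasing nonnegative reals with b_0 = 0 and b_s > 0 for s ≥ 1. Let μ be the probability distribution on {0,...,w} with μ(s) = μ(0)·∏_{i=1}^{s} a_{i-1}/b_i, and define the operator T by (Tf)(s) = a_s f(s+1) − b_s f(s). Then for any t ∈ {1,...,w−1}, the function f defined by f(0)=0 and f(s) = (μ(t)/(b_s μ(s)))·(1_{t<s} − μ({0,...,s−1})) for s ≥ 1 satisfies (Tf)(s) = 1_{s=t} − μ(t) for all s ∈ {0,...,w}. -/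

import Mathlib

/-- Existence of an inverse to the Stein operator `T f(s) = a_s f(s+1) - b_s f(s)`
for a birth–death type distribution `μ` on `{0,...,w}`: the explicitly defined `f`
satisfies `T f(s) = 1_{s=t} - μ(t)` for all `s ∈ {0,...,w}`. -/
theorem stein_operator_inverse_exists (w t : ℕ) (hw : 1 ≤ w) (ht : 1 ≤ t) (htw : t < w)
    (a b μ f : ℕ → ℝ)
    (ha_pos : ∀ s, s < w → 0 < a s) (ha_zero : a w = 0)
    (ha_anti : ∀ s, s < w → a (s + 1) < a s)
    (hb_zero : b 0 = 0) (hb_pos : ∀ s, 1 ≤ s → s ≤ w → 0 < b s)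
    (hb_mono : ∀ s, s < w → b s < b (s + 1))
    (hμ : ∀ s, s ≤ w → μ s = μ 0 * ∏ i ∈ Finset.range s, (a i / b (i + 1)))
    (hμsum : ∑ s ∈ Finset.range (w + 1), μ s = 1)
    (hf0 : f 0 = 0)
    (hf : ∀ s, 1 ≤ s → s ≤ w →
      f s = μ t / (b s * μ s) *
        ((if t < s then (1 : ℝ) else 0) - ∑ i ∈ Finset.range s, μ i)) :
    ∀ s, s ≤ w → a s * f (s + 1) - b s * f s = (if s = t then (1 : ℝ) else 0) - μ t := by
  have hprod : ∀ s, s ≤ w → 0 < ∏ i ∈ Finset.range s, (a i / b (i + 1)) := by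
    intro s hs
    apply Finset.prod_pos
    intro i hi
    simp only [Finset.mem_range] at hi
    exact div_pos (ha_pos i (by omega)) (hb_pos (i + 1) (by omega) (by omega))
  have hμ0 : 0 < μ 0 := by
    by_contra h
    push_neg at h
    have hle : ∑ s ∈ Finset.range (w + 1), μ s ≤ 0 := by
      apply Finset.sum_nonpos
      intro s hs
      simp only [Finset.mem_range] at hs
      rw [hμ s (by omega)]
      exact mul_nonpos_of_nonpos_of_nonneg h (le_of_lt (hprod s (by omega)))
    linarith
  have hμpos : ∀ s, s ≤ w → 0 < μ s := fun s hs => by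
    rw [hμ s hs]; exact mul_pos hμ0 (hprod s hs)
  have hrec : ∀ s, s < w → b (s + 1) * μ (s + 1) = a s * μ s := by
    intro s hs
    have hb : b (s + 1) ≠ 0 := ne_of_gt (hb_pos _ (by omega) (by omega))
    have h1 : μ (s + 1) = μ s * (a s / b (s + 1)) := by
      rw [hμ (s + 1) (by omega), Finset.prod_range_succ, ← mul_assoc, ← hμ s (by omega)]
    rw [h1]
    field_simp
  intro s hs
  rcases Nat.eq_zero_or_pos s with h0 | hpos
  · subst h0
    rw [hb_zero, hf0, hf 1 le_rfl hw]
    have h1 : b 1 * μ 1 = a 0 * μ 0 := hrec 0 (by omega)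
    have ha0 : a 0 ≠ 0 := ne_of_gt (ha_pos 0 (by omega))
    have hμ0' : μ 0 ≠ 0 := ne_of_gt hμ0
    rw [h1]
    simp only [show ¬ t < 1 by omega, if_neg, show (0:ℕ) ≠ t by omega,
      Finset.sum_range_one, if_false]
    field_simp
    ring
  · have hbs : b s ≠ 0 := ne_of_gt (hb_pos s hpos hs)
    have hμs : μ s ≠ 0 := ne_of_gt (hμpos s hs)
    rcases eq_or_lt_of_le hs with hsw | hsw
    · subst hsw
      rw [ha_zero, hf s hpos le_rfl]
      have hsum : ∑ i ∈ Finset.range s, μ i = 1 - μ s := by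
        have := hμsum
        rw [Finset.sum_range_succ] at this
        linarith
      rw [hsum, if_pos htw, if_neg (by omega)]
      field_simp
      ring
    · have hfs := hf s hpos (le_of_lt hsw)
      have hfs1 := hf (s + 1) (by omega) (by omega)
      have hr := hrec s hsw
      have hbs1 : b (s + 1) ≠ 0 := ne_of_gt (hb_pos _ (by omega) (by omega))
      have hμs1 : μ (s + 1) ≠ 0 := ne_of_gt (hμpos _ (by omega))
      have ha' : a s = b (s + 1) * μ (s + 1) / μ s := by
        field_simp
        linarith [hr]
      rw [hfs, hfs1, Finset.sum_range_succ, ha']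
      set S := ∑ i ∈ Finset.range s, μ i with hS
      rcases lt_trichotomy t s with hts | hts
      · rw [if_pos (by omega), if_pos hts, if_neg (by omega)]
        field_simp
        ring
      · rcases hts with hts | hts
        · subst hts
          rw [if_pos (by omega), if_neg (by omega), if_pos rfl]
          field_simp
          ring
        · rw [if_neg (by omega), if_neg (by omega), if_neg (by omega)]
          field_simp
          ring
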